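/- Let u : ℝ³ → ℝ be a C³ solution of u_yy = u_tx + u_y·u_xx − u_x·u_xy. Then the function v(t,x,y) := 3u − 2x·u_x − y·u_y satisfies the linearized equation v_yy = v_tx + u_y·v_xx + u_xx·v_y − u_x·v_xy − u_xy·v_x at every point of ℝ³. -/

import Mathlib

noncomputable def pd3 (v : ℝ × ℝ × ℝ) (f : ℝ × ℝ × ℝ → ℝ) : ℝ × ℝ × ℝ → ℝ :=
  fun p => fderiv ℝ f p v

noncomputable def dt : (ℝ × ℝ × ℝ → ℝ) → ℝ × ℝ × ℝ → ℝ := pd3 (1, 0, 0)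
noncomputable def dx : (ℝ × ℝ × ℝ → ℝ) → ℝ × ℝ × ℝ → ℝ := pd3 (0, 1, 0)
noncomputable def dy : (ℝ × ℝ × ℝ → ℝ) → ℝ × ℝ × ℝ → ℝ := pd3 (0, 0, 1)

lemma pd3_contDiff {n : ℕ} (v : ℝ×ℝ×ℝ) {f : ℝ×ℝ×ℝ → ℝ} (hf : ContDiff ℝ (n+1 : ℕ) f) :
    ContDiff ℝ n (pd3 v f) := by
  exact (hf.fderiv_right (by norm_cast)).clm_apply contDiff_const

lemma pd3_comm {f : ℝ×ℝ×ℝ → ℝ} (hf : ContDiff ℝ 2 f) (v w : ℝ×ℝ×ℝ) (p : ℝ×ℝ×ℝ) :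
    pd3 v (pd3 w f) p = pd3 w (pd3 v f) p := by
  have hd : Differentiable ℝ (fderiv ℝ f) :=
    (hf.fderiv_right (m := 1) (by norm_num)).differentiable (by norm_num)
  have key : ∀ a b : ℝ×ℝ×ℝ, pd3 a (pd3 b f) p = fderiv ℝ (fderiv ℝ f) p a b := by
    intro a b
    have : pd3 b f = fun q => (fderiv ℝ f q) b := rfl
    rw [pd3, this, fderiv_clm_apply (hd p) (differentiableAt_const b)]
    simp
  rw [key, key]
  exact (hf.contDiffAt.isSymmSndFDerivAt (by norm_num)) v w

lemma pd3_add {f g : ℝ×ℝ×ℝ → ℝ} {p : ℝ×ℝ×ℝ} (v : ℝ×ℝ×ℝ)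
    (hf : DifferentiableAt ℝ f p) (hg : DifferentiableAt ℝ g p) :
    pd3 v (fun q => f q + g q) p = pd3 v f p + pd3 v g p := by
  simp [pd3, fderiv_fun_add hf hg]

lemma pd3_sub {f g : ℝ×ℝ×ℝ → ℝ} {p : ℝ×ℝ×ℝ} (v : ℝ×ℝ×ℝ)
    (hf : DifferentiableAt ℝ f p) (hg : DifferentiableAt ℝ g p) :
    pd3 v (fun q => f q - g q) p = pd3 v f p - pd3 v g p := by
  simp [pd3, fderiv_fun_sub hf hg]

lemma pd3_mul {f g : ℝ×ℝ×ℝ → ℝ} {p : ℝ×ℝ×ℝ} (v : ℝ×ℝ×ℝ)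
    (hf : DifferentiableAt ℝ f p) (hg : DifferentiableAt ℝ g p) :
    pd3 v (fun q => f q * g q) p = f p * pd3 v g p + g p * pd3 v f p := by
  simp [pd3, fderiv_fun_mul hf hg]

lemma pd3_const_mul {f : ℝ×ℝ×ℝ → ℝ} {p : ℝ×ℝ×ℝ} (v : ℝ×ℝ×ℝ) (c : ℝ)
    (hf : DifferentiableAt ℝ f p) :
    pd3 v (fun q => c * f q) p = c * pd3 v f p := by
  simp [pd3, fderiv_const_mul hf]

lemma pd3_coord1 (v : ℝ×ℝ×ℝ) (p : ℝ×ℝ×ℝ) : pd3 v (fun q => q.2.1) p = v.2.1 := by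
  have : (fun q : ℝ×ℝ×ℝ => q.2.1) =
      ((ContinuousLinearMap.fst ℝ ℝ ℝ).comp (ContinuousLinearMap.snd ℝ ℝ (ℝ×ℝ)) : ℝ×ℝ×ℝ →L[ℝ] ℝ) := rfl
  rw [pd3, this, ContinuousLinearMap.fderiv]
  rfl

lemma pd3_coord2 (v : ℝ×ℝ×ℝ) (p : ℝ×ℝ×ℝ) : pd3 v (fun q => q.2.2) p = v.2.2 := by
  have : (fun q : ℝ×ℝ×ℝ => q.2.2) =
      ((ContinuousLinearMap.snd ℝ ℝ ℝ).comp (ContinuousLinearMap.snd ℝ ℝ (ℝ×ℝ)) : ℝ×ℝ×ℝ →L[ℝ] ℝ) := rfl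
  rw [pd3, this, ContinuousLinearMap.fderiv]
  rfl

lemma pd_shape {f g h : ℝ×ℝ×ℝ → ℝ} (a : ℝ)
    (hf : Differentiable ℝ f) (hg : Differentiable ℝ g) (hh : Differentiable ℝ h)
    (w q : ℝ×ℝ×ℝ) :
    pd3 w (fun r => a * f r - 2*(r.2.1 * g r) - r.2.2 * h r) q
      = a * pd3 w f q - 2*(w.2.1 * g q + q.2.1 * pd3 w g q)
        - (w.2.2 * h q + q.2.2 * pd3 w h q) := by
  have dfst : Differentiable ℝ (fun r : ℝ×ℝ×ℝ => r.2.1) :=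
    differentiable_fst.comp differentiable_snd
  have dsnd : Differentiable ℝ (fun r : ℝ×ℝ×ℝ => r.2.2) :=
    differentiable_snd.comp differentiable_snd
  have d1 : DifferentiableAt ℝ (fun r => a * f r) q := (hf q).const_mul a
  have d2 : DifferentiableAt ℝ (fun r : ℝ×ℝ×ℝ => 2*(r.2.1 * g r)) q :=
    ((dfst q).mul (hg q)).const_mul 2
  have d3 : DifferentiableAt ℝ (fun r : ℝ×ℝ×ℝ => r.2.2 * h r) q := (dsnd q).mul (hh q)
  rw [pd3_sub (f := fun r => a * f r - 2*(r.2.1 * g r)) w (d1.sub d2) d3, pd3_sub w d1 d2, pd3_const_mul w a (hf q),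
    pd3_const_mul (f := fun r => r.2.1 * g r) w 2 ((dfst q).mul (hg q)), pd3_mul w (dfst q) (hg q),
    pd3_mul w (dsnd q) (hh q), pd3_coord1, pd3_coord2]
  ring

lemma pd_shape2 {f g h k l : ℝ×ℝ×ℝ → ℝ}
    (hf : Differentiable ℝ f) (hg : Differentiable ℝ g) (hh : Differentiable ℝ h)
    (hk : Differentiable ℝ k) (hl : Differentiable ℝ l) (w q : ℝ×ℝ×ℝ) :
    pd3 w (fun r => f r + g r * h r - k r * l r) q
      = pd3 w f q + (g q * pd3 w h q + h q * pd3 w g q)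
        - (k q * pd3 w l q + l q * pd3 w k q) := by
  rw [pd3_sub (f := fun r => f r + g r * h r) (g := fun r => k r * l r) w ((hf q).add ((hg q).mul (hh q))) ((hk q).mul (hl q)),
    pd3_add (g := fun r => g r * h r) w (hf q) ((hg q).mul (hh q)), pd3_mul w (hg q) (hh q), pd3_mul w (hk q) (hl q)]

theorem theta2_is_symmetry (u : ℝ × ℝ × ℝ → ℝ) (hu : ContDiff ℝ 3 u)
    (heq : ∀ p : ℝ × ℝ × ℝ,
      dy (dy u) p = dt (dx u) p + dy u p * dx (dx u) p - dx u p * dx (dy u) p) :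
    ∀ p : ℝ × ℝ × ℝ,
      (fun v : ℝ × ℝ × ℝ → ℝ =>
        dy (dy v) p = dt (dx v) p + dy u p * dx (dx v) p + dx (dx u) p * dy v p
          - dx u p * dx (dy v) p - dx (dy u) p * dx v p)
      (fun q => 3 * u q - 2 * q.2.1 * dx u q - q.2.2 * dy u q) := by
  intro p
  have hu2 : ContDiff ℝ 2 u := hu.of_le (by norm_num)
  have hu3' : ContDiff ℝ ((2:ℕ)+1) u := by exact_mod_cast hu
  have hC2 : ∀ w : ℝ×ℝ×ℝ, ContDiff ℝ (2:ℕ) (pd3 w u) := fun w => pd3_contDiff w hu3'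
  have hC2' : ∀ w : ℝ×ℝ×ℝ, ContDiff ℝ 2 (pd3 w u) := fun w => by exact_mod_cast hC2 w
  have hC1 : ∀ w w' : ℝ×ℝ×ℝ, ContDiff ℝ (1:ℕ) (pd3 w' (pd3 w u)) :=
    fun w w' => pd3_contDiff w' (hC2 w)
  have hd0 : Differentiable ℝ u := hu.differentiable (by norm_num)
  have hd1 : ∀ w : ℝ×ℝ×ℝ, Differentiable ℝ (pd3 w u) :=
    fun w => (hC2' w).differentiable (by norm_num)
  have hd2 : ∀ w w' : ℝ×ℝ×ℝ, Differentiable ℝ (pd3 w' (pd3 w u)) :=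
    fun w w' => (hC1 w w').differentiable (by norm_num)
  -- pointwise equation in pd3 form
  have heqp : ∀ r : ℝ×ℝ×ℝ, pd3 (0,0,1) (pd3 (0,0,1) u) r
      = pd3 (1,0,0) (pd3 (0,1,0) u) r + pd3 (0,0,1) u r * pd3 (0,1,0) (pd3 (0,1,0) u) r
        - pd3 (0,1,0) u r * pd3 (0,1,0) (pd3 (0,0,1) u) r := by
    intro r
    have := heq r
    simp only [dt, dx, dy] at this
    exact this
  have heqf : pd3 (0,0,1) (pd3 (0,0,1) u)
      = fun r => pd3 (1,0,0) (pd3 (0,1,0) u) r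
          + pd3 (0,0,1) u r * pd3 (0,1,0) (pd3 (0,1,0) u) r
          - pd3 (0,1,0) u r * pd3 (0,1,0) (pd3 (0,0,1) u) r := funext heqp
  have cxy : pd3 ((0:ℝ),(0:ℝ),(1:ℝ)) (pd3 ((0:ℝ),(1:ℝ),(0:ℝ)) u)
      = pd3 ((0:ℝ),(1:ℝ),(0:ℝ)) (pd3 ((0:ℝ),(0:ℝ),(1:ℝ)) u) :=
    funext fun r => pd3_comm hu2 _ _ r
  simp only [dt, dx, dy]
  have hV : (fun q : ℝ×ℝ×ℝ => 3 * u q - 2 * q.2.1 * pd3 (0,1,0) u q - q.2.2 * pd3 (0,0,1) u q)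
      = fun r : ℝ×ℝ×ℝ => (3:ℝ) * u r - 2*(r.2.1 * pd3 (0,1,0) u r) - r.2.2 * pd3 (0,0,1) u r := by
    funext r; ring
  rw [hV]
  set VF : ℝ×ℝ×ℝ → ℝ :=
    fun r => (3:ℝ) * u r - 2*(r.2.1 * pd3 (0,1,0) u r) - r.2.2 * pd3 (0,0,1) u r with hVF
  -- first derivatives of VF
  have hxV : pd3 (0,1,0) VF = fun r =>
      (1:ℝ) * pd3 (0,1,0) u r - 2*(r.2.1 * pd3 (0,1,0) (pd3 (0,1,0) u) r)
        - r.2.2 * pd3 (0,1,0) (pd3 (0,0,1) u) r := by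
    funext r
    rw [hVF, pd_shape 3 hd0 (hd1 _) (hd1 _)]
    norm_num; ring
  have hyV : pd3 (0,0,1) VF = fun r =>
      (2:ℝ) * pd3 (0,0,1) u r - 2*(r.2.1 * pd3 (0,1,0) (pd3 (0,0,1) u) r)
        - r.2.2 * pd3 (0,0,1) (pd3 (0,0,1) u) r := by
    funext r
    rw [hVF, pd_shape 3 hd0 (hd1 _) (hd1 _), pd3_comm hu2 (0,0,1) (0,1,0) r]
    norm_num; ring
  -- third order reductions
  have r2 : pd3 (0,1,0) (pd3 (0,0,1) (pd3 (0,0,1) u)) p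
      = pd3 (1,0,0) (pd3 (0,1,0) (pd3 (0,1,0) u)) p
        + pd3 (0,0,1) u p * pd3 (0,1,0) (pd3 (0,1,0) (pd3 (0,1,0) u)) p
        - pd3 (0,1,0) u p * pd3 (0,1,0) (pd3 (0,1,0) (pd3 (0,0,1) u)) p := by
    rw [heqf, pd_shape2 (hd2 _ _) (hd1 _) (hd2 _ _) (hd1 _) (hd2 _ _),
      pd3_comm (hC2' (0,1,0)) (0,1,0) (1,0,0) p]
    ring
  have r3 : pd3 (0,0,1) (pd3 (0,0,1) (pd3 (0,0,1) u)) p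
      = pd3 (1,0,0) (pd3 (0,1,0) (pd3 (0,0,1) u)) p
        + pd3 (0,0,1) u p * pd3 (0,1,0) (pd3 (0,1,0) (pd3 (0,0,1) u)) p
        + pd3 (0,1,0) (pd3 (0,1,0) u) p *
            (pd3 (1,0,0) (pd3 (0,1,0) u) p
              + pd3 (0,0,1) u p * pd3 (0,1,0) (pd3 (0,1,0) u) p
              - pd3 (0,1,0) u p * pd3 (0,1,0) (pd3 (0,0,1) u) p)
        - pd3 (0,1,0) u p *
            (pd3 (1,0,0) (pd3 (0,1,0) (pd3 (0,1,0) u)) p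
              + pd3 (0,0,1) u p * pd3 (0,1,0) (pd3 (0,1,0) (pd3 (0,1,0) u)) p
              - pd3 (0,1,0) u p * pd3 (0,1,0) (pd3 (0,1,0) (pd3 (0,0,1) u)) p)
        - pd3 (0,1,0) (pd3 (0,0,1) u) p * pd3 (0,1,0) (pd3 (0,0,1) u) p := by
    rw [heqf, pd_shape2 (hd2 _ _) (hd1 _) (hd2 _ _) (hd1 _) (hd2 _ _)]
    rw [pd3_comm (hC2' (0,1,0)) (0,0,1) (1,0,0) p,
      pd3_comm (hC2' (0,1,0)) (0,0,1) (0,1,0) p, cxy,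
      pd3_comm (hC2' (0,0,1)) (0,0,1) (0,1,0) p, r2, heqp p]
    ring
  -- second derivatives of VF at p
  have Etx : pd3 (1,0,0) (pd3 (0,1,0) VF) p
      = pd3 (1,0,0) (pd3 (0,1,0) u) p
        - 2*(p.2.1 * pd3 (1,0,0) (pd3 (0,1,0) (pd3 (0,1,0) u)) p)
        - p.2.2 * pd3 (1,0,0) (pd3 (0,1,0) (pd3 (0,0,1) u)) p := by
    rw [hxV, pd_shape 1 (hd1 _) (hd2 _ _) (hd2 _ _)]
    norm_num
    try ring
  have Exx : pd3 (0,1,0) (pd3 (0,1,0) VF) p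
      = - pd3 (0,1,0) (pd3 (0,1,0) u) p
        - 2*(p.2.1 * pd3 (0,1,0) (pd3 (0,1,0) (pd3 (0,1,0) u)) p)
        - p.2.2 * pd3 (0,1,0) (pd3 (0,1,0) (pd3 (0,0,1) u)) p := by
    rw [hxV, pd_shape 1 (hd1 _) (hd2 _ _) (hd2 _ _)]
    norm_num; ring
  have Exy : pd3 (0,1,0) (pd3 (0,0,1) VF) p
      = - 2*(p.2.1 * pd3 (0,1,0) (pd3 (0,1,0) (pd3 (0,0,1) u)) p)
        - p.2.2 * pd3 (0,1,0) (pd3 (0,0,1) (pd3 (0,0,1) u)) p := by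
    rw [hyV, pd_shape 2 (hd1 _) (hd2 _ _) (hd2 _ _)]
    norm_num; ring
  have Eyy : pd3 (0,0,1) (pd3 (0,0,1) VF) p
      = 2 * pd3 (0,0,1) (pd3 (0,0,1) u) p
        - 2*(p.2.1 * pd3 (0,1,0) (pd3 (0,0,1) (pd3 (0,0,1) u)) p)
        - (pd3 (0,0,1) (pd3 (0,0,1) u) p
          + p.2.2 * pd3 (0,0,1) (pd3 (0,0,1) (pd3 (0,0,1) u)) p) := by
    rw [hyV, pd_shape 2 (hd1 _) (hd2 _ _) (hd2 _ _),
      pd3_comm (hC2' (0,0,1)) (0,0,1) (0,1,0) p]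
    norm_num
    try ring
  have Ex : pd3 (0,1,0) VF p
      = pd3 (0,1,0) u p - 2*(p.2.1 * pd3 (0,1,0) (pd3 (0,1,0) u) p)
        - p.2.2 * pd3 (0,1,0) (pd3 (0,0,1) u) p := by
    rw [hxV]; ring
  have Ey : pd3 (0,0,1) VF p
      = 2 * pd3 (0,0,1) u p - 2*(p.2.1 * pd3 (0,1,0) (pd3 (0,0,1) u) p)
        - p.2.2 * pd3 (0,0,1) (pd3 (0,0,1) u) p := by
    rw [hyV]
  rw [Eyy, Etx, Exx, Exy, Ex, Ey, r2, r3, heqp p]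
  ring
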